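/- arXiv:1009.3899 — 9 statements merged into one kernel-verified Lean document; each statement's English description precedes it below -/
import Mathlib

section
/- Let F be a field and G a subfield of F. Suppose A ⊆ F is a set all of whose cross ratios lie in G, i.e., X(a,b,c,d) = (a-b)(c-d)/((a-d)(c-b)) ∈ G for all a,b,c,d ∈ A with a ≠ d and b ≠ c. Then either |A ∩ (xG + y)| ≤ 2 for all x,y ∈ F, or there exist x,y ∈ F such that A ⊆ xG + y. -/
/-- The cross ratio of four field elements. -/
def crossRatio {F : Type*} [Field F] (a b c d : F) : F :=
  (a - b) * (c - d) / ((a - d) * (c - b))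

lemma exists_three_of_two_lt_encard {α : Type*} {s : Set α} (h : 2 < s.encard) :
    ∃ a ∈ s, ∃ b ∈ s, ∃ c ∈ s, a ≠ b ∧ a ≠ c ∧ b ≠ c := by
  obtain ⟨a, b, ha, hb, hab⟩ := Set.one_lt_encard_iff.1 (lt_trans (by norm_num) h)
  have hns : ¬ s ⊆ {a, b} := by
    intro hsub
    have := Set.encard_mono hsub
    rw [Set.encard_pair hab] at this
    exact absurd h (not_lt.2 this)
  obtain ⟨c, hc, hcab⟩ := Set.not_subset.1 hns
  simp only [Set.mem_insert_iff, Set.mem_singleton_iff, not_or] at hcab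
  exact ⟨a, ha, b, hb, c, hc, hab, Ne.symm hcab.1, Ne.symm hcab.2⟩

theorem stmt_1 {F : Type*} [Field F] (G : Subfield F) (A : Set F)
    (hX : ∀ a ∈ A, ∀ b ∈ A, ∀ c ∈ A, ∀ d ∈ A, a ≠ d → b ≠ c → crossRatio a b c d ∈ G) :
    (∀ x y : F, (A ∩ (fun g => x * g + y) '' (G : Set F)).encard ≤ 2) ∨
      ∃ x y : F, A ⊆ (fun g => x * g + y) '' (G : Set F) := by
  rw [or_iff_not_imp_left]
  intro h
  push_neg at h
  obtain ⟨x, y, hgt⟩ := h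
  refine ⟨x, y, ?_⟩
  obtain ⟨a, ha, b, hb, c, hc, hab, hac, hbc⟩ := exists_three_of_two_lt_encard hgt
  obtain ⟨haA, α, hαG, hαa⟩ := ha
  obtain ⟨hbA, β, hβG, hβb⟩ := hb
  obtain ⟨hcA, γ, hγG, hγc⟩ := hc
  simp only at hαa hβb hγc
  subst hαa hβb hγc
  have hx : x ≠ 0 := by
    rintro rfl
    simp at hab
  intro d hd
  by_cases hda : d = x * α + y
  · exact hda ▸ ⟨α, hαG, rfl⟩
  by_cases hdb : d = x * β + y
  · exact hdb ▸ ⟨β, hβG, rfl⟩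
  by_cases hdc : d = x * γ + y
  · exact hdc ▸ ⟨γ, hγG, rfl⟩
  have htG := hX _ haA _ hbA _ hcA d hd (Ne.symm hda) hbc
  have hαβ : α ≠ β := by
    intro hh; exact hab (by rw [hh])
  have had : (x * α + y) - d ≠ 0 := sub_ne_zero.mpr (Ne.symm hda)
  have hcb : (x * γ + y) - (x * β + y) ≠ 0 := sub_ne_zero.mpr (Ne.symm hbc)
  have hαβ' : (α : F) - β ≠ 0 := sub_ne_zero.mpr hαβ
  set g : F := crossRatio (x * α + y) (x * β + y) (x * γ + y) d * ((γ - β) / (α - β)) with hg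
  have hgG : g ∈ G := mul_mem htG (div_mem (sub_mem hγG hβG) (sub_mem hαG hβG))
  have key : (x * γ + y) - d = g * ((x * α + y) - d) := by
    rw [hg, crossRatio, div_mul_div_comm, div_mul_eq_mul_div,
      eq_div_iff (mul_ne_zero (mul_ne_zero had hcb) hαβ')]
    ring
  have hg1 : (1 : F) - g ≠ 0 := by
    intro hh
    have : g = 1 := by linear_combination -hh
    rw [this, one_mul] at key
    exact hac (by linear_combination -key)
  clear_value g
  refine ⟨(γ - g * α) / (1 - g), div_mem (sub_mem hγG (mul_mem hgG hαG)) (sub_mem (one_mem G) hgG), ?_⟩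
  have hxe : x * (γ - g * α) = (d - y) * (1 - g) := by linear_combination key
  simp only
  rw [mul_div_assoc', hxe, mul_div_cancel_right₀ _ hg1, sub_add_cancel]
end

section
/- Let F be a field, G a subfield of F, and A ⊆ F a set containing at least 3 elements of some coset xG + y (x,y ∈ F). If A is not contained in xG + y, then some cross ratio of four elements of A does not lie in G. Equivalently: if |A ∩ (xG+y)| ≥ 3 and all cross ratios of elements of A lie in G, then A ⊆ xG + y. -/
theorem stmt_2 {F : Type*} [Field F] (G : Subfield F) (A : Set F) (x y : F)
    (hcard : 3 ≤ (A ∩ (fun g => x * g + y) '' (G : Set F)).encard)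
    (hX : ∀ a ∈ A, ∀ b ∈ A, ∀ c ∈ A, ∀ d ∈ A, a ≠ d → b ≠ c → crossRatio a b c d ∈ G) :
    A ⊆ (fun g => x * g + y) '' (G : Set F) := by
  set S := (fun g => x * g + y) '' (G : Set F) with hS
  have hne : (A ∩ S).Nonempty := by
    rw [Set.nonempty_iff_ne_empty]
    intro h
    rw [h] at hcard
    simp at hcard
  obtain ⟨a, ha⟩ := hne
  obtain ⟨b, hb, hba⟩ := Set.exists_ne_of_one_lt_encard
    (lt_of_lt_of_le (by norm_num) hcard) a
  have hsub : ¬ (A ∩ S) ⊆ {a, b} := by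
    intro h
    have h2 := (Set.encard_mono h).trans_lt (by
      calc ({a, b} : Set F).encard ≤ 2 := (Set.encard_insert_le _ _).trans
            (by rw [Set.encard_singleton]; exact one_add_one_eq_two.le)
        _ < 3 := by norm_num)
    exact absurd hcard (not_le.mpr h2)
  obtain ⟨c, hc, hcab⟩ := Set.not_subset.mp hsub
  have hca : c ≠ a := fun h => hcab (by simp [h])
  have hcb : c ≠ b := fun h => hcab (by simp [h])
  obtain ⟨ga, hga, hxa⟩ := ha.2
  obtain ⟨gb, hgb, hxb⟩ := hb.2
  obtain ⟨gc, hgc, hxc⟩ := hc.2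
  simp only at hxa hxb hxc
  have hx : x ≠ 0 := by
    intro h
    apply hba
    rw [← hxb, ← hxa, h, zero_mul, zero_mul]
  intro d hd
  by_cases hda : d = a
  · exact hda ▸ ha.2
  by_cases hdb : d = b
  · exact hdb ▸ hb.2
  by_cases hdc : d = c
  · exact hdc ▸ hc.2
  set r := crossRatio a b c d with hrdef
  have hr : r ∈ G := hX a ha.1 b hb.1 c hc.1 d hd (Ne.symm hda) (Ne.symm hcb)
  have had : a - d ≠ 0 := sub_ne_zero.mpr (Ne.symm hda)
  have hcbne : c - b ≠ 0 := sub_ne_zero.mpr hcb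
  have habne : a - b ≠ 0 := sub_ne_zero.mpr (Ne.symm hba)
  have hcdne : c - d ≠ 0 := sub_ne_zero.mpr (Ne.symm hdc)
  have key : r * ((a - d) * (c - b)) = (a - b) * (c - d) := by
    rw [hrdef, crossRatio, div_mul_cancel₀]
    exact mul_ne_zero had hcbne
  have hcbx : c - b = x * (gc - gb) := by rw [← hxc, ← hxb]; ring
  have habx : a - b = x * (ga - gb) := by rw [← hxa, ← hxb]; ring
  have hst : r * (gc - gb) - (ga - gb) ≠ 0 := by
    intro h0
    apply hca
    have h1 : r * (c - b) = a - b := by rw [hcbx, habx]; linear_combination x * h0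
    have h2 : (a - b) * (a - d) = (a - b) * (c - d) := by
      linear_combination key - (a - d) * h1
    have h3 := mul_left_cancel₀ habne h2
    have h4 : a = c := by linear_combination h3
    exact h4.symm
  refine ⟨(r * (gc - gb) * ga - (ga - gb) * gc) / (r * (gc - gb) - (ga - gb)), ?_, ?_⟩
  · exact div_mem (sub_mem (mul_mem (mul_mem hr (sub_mem hgc hgb)) hga)
      (mul_mem (sub_mem hga hgb) hgc)) (sub_mem (mul_mem hr (sub_mem hgc hgb)) (sub_mem hga hgb))
  · show x * ((r * (gc - gb) * ga - (ga - gb) * gc) / (r * (gc - gb) - (ga - gb))) + y = d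
    have ha' : a = x * ga + y := hxa.symm
    have hb' : b = x * gb + y := hxb.symm
    have hc' : c = x * gc + y := hxc.symm
    rw [ha', hb', hc'] at key
    have main : x * (x * (r * (gc - gb) * ga - (ga - gb) * gc)
        + y * (r * (gc - gb) - (ga - gb)))
        = x * (d * (r * (gc - gb) - (ga - gb))) := by linear_combination key
    have main2 := mul_left_cancel₀ hx main
    field_simp
    linear_combination main2
end

section
/- Let F be a field, λ > 0, A ⊆ F a (1,λ)-strong-antifield, and B ⊆ F a finite set. Suppose there is an injection τ : B → A preserving cross ratios, i.e., X(τ(b₁),τ(b₂),τ(b₃),τ(b₄)) = X(b₁,b₂,b₃,b₄) whenever b₁,b₂,b₃,b₄ ∈ B with b₁ ≠ b₄ and b₂ ≠ b₃. Then B is a (1,λ)-antifield. -/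
/-- A `(1,λ)`-antifield: the intersection with every affine copy of a finite subfield
has size at most `max λ √|G|`. -/
def IsAntifield {F : Type*} [Field F] (lam : ℝ) (A : Set F) : Prop :=
  ∀ G : Subfield F, (G : Set F).Finite → ∀ a b : F,
    ((A ∩ (fun g => a * g + b) '' (G : Set F)).ncard : ℝ) ≤
      max lam (Real.sqrt ((G : Set F).ncard))

/-- A `(1,λ)`-strong-antifield: an antifield which, for every finite subfield `G` with
`|G| ≥ λ`, meets strictly fewer than `max{λ, √|G|}/2` distinct additive translates of `G`. -/
def IsStrongAntifield {F : Type*} [Field F] (lam : ℝ) (A : Set F) : Prop :=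
  IsAntifield lam A ∧
    ∀ G : Subfield F, (G : Set F).Finite → lam ≤ ((G : Set F).ncard : ℝ) →
      ∃ n : ℕ, (n : ℝ) < max lam (Real.sqrt ((G : Set F).ncard)) / 2 ∧
        {S : Set F | (∃ b : F, S = (fun g => g + b) '' (G : Set F)) ∧
          (A ∩ S).Nonempty}.encard ≤ n

lemma core_lemma {F : Type*} [Field F] (G : Subfield F) {x y z g₂ g₃ k : F}
    (hzy : z - y ≠ 0) (hg₂ : g₂ ∈ G) (hg₃ : g₃ ∈ G) (hk : k ∈ G) (hne : g₂ ≠ g₃)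
    (heq : (z - y) * g₃ - (x - y) = k * ((z - y) * g₂ - (x - y)))
    (hr : (x - y) / (z - y) ∉ G) : False := by
  by_cases hk1 : k = 1
  · subst hk1
    apply hne
    have h : (z - y) * (g₃ - g₂) = 0 := by linear_combination heq
    rcases mul_eq_zero.1 h with h | h
    · exact absurd h hzy
    · exact (sub_eq_zero.1 h).symm
  · apply hr
    have h : (x - y) / (z - y) = (k * g₂ - g₃) / (k - 1) := by
      rw [div_eq_div_iff hzy (sub_ne_zero.2 hk1)]
      linear_combination heq
    rw [h]
    exact G.div_mem (G.sub_mem (G.mul_mem hk hg₂) hg₃) (G.sub_mem hk G.one_mem)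

lemma subA {F : Type*} [Field F] (G : Subfield F) {x y z t₂ t₃ g₂ g₃ : F}
    (hxy : x - y ≠ 0) (hxz : x - z ≠ 0) (hzy : z - y ≠ 0)
    (hg₂ : g₂ ∈ G) (hg₃ : g₃ ∈ G)
    (h2 : (t₂ - x) * ((z - y) * g₂ - (x - y)) = (x - y) * (x - z))
    (h3 : (t₃ - x) * ((z - y) * g₃ - (x - y)) = (x - y) * (x - z))
    (ht : t₂ ≠ t₃) (hm2 : t₂ - x ∈ G) (hm3 : t₃ - x ∈ G)
    (hr : (x - y) / (z - y) ∉ G) : False := by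
  have hK : (x - y) * (x - z) ≠ 0 := mul_ne_zero hxy hxz
  have hδ2 : (z - y) * g₂ - (x - y) ≠ 0 := by
    intro h; rw [h, mul_zero] at h2; exact hK h2.symm
  have ht3x : t₃ - x ≠ 0 := by
    intro h; rw [h, zero_mul] at h3; exact hK h3.symm
  have hg23 : g₂ ≠ g₃ := by
    intro h
    subst h
    apply ht
    have h' := mul_right_cancel₀ hδ2 (h2.trans h3.symm)
    linear_combination h'
  refine core_lemma G hzy hg₂ hg₃ (G.div_mem hm2 hm3) hg23 ?_ hr
  rw [div_mul_eq_mul_div, eq_div_iff ht3x]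
  linear_combination h3 - h2

lemma subB {F : Type*} [Field F] (G : Subfield F) {x y z t₁ t₂ t₃ g₁ g₂ g₃ : F}
    (hxy : x - y ≠ 0) (hxz : x - z ≠ 0) (hzy : z - y ≠ 0)
    (hg₁ : g₁ ∈ G) (hg₂ : g₂ ∈ G) (hg₃ : g₃ ∈ G)
    (h1 : (t₁ - x) * ((z - y) * g₁ - (x - y)) = (x - y) * (x - z))
    (h2 : (t₂ - x) * ((z - y) * g₂ - (x - y)) = (x - y) * (x - z))
    (h3 : (t₃ - x) * ((z - y) * g₃ - (x - y)) = (x - y) * (x - z))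
    (ht12 : t₁ ≠ t₂) (ht13 : t₁ ≠ t₃) (ht23 : t₂ ≠ t₃)
    (hm12 : t₁ - t₂ ∈ G) (hm13 : t₁ - t₃ ∈ G)
    (hr : (x - y) / (z - y) ∉ G) : False := by
  have hK : (x - y) * (x - z) ≠ 0 := mul_ne_zero hxy hxz
  have hδ1 : (z - y) * g₁ - (x - y) ≠ 0 := by
    intro h; rw [h, mul_zero] at h1; exact hK h1.symm
  have hδ2 : (z - y) * g₂ - (x - y) ≠ 0 := by
    intro h; rw [h, mul_zero] at h2; exact hK h2.symm
  have hgne : ∀ {s t gs gt : F}, s ≠ t →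
      (s - x) * ((z - y) * gs - (x - y)) = (x - y) * (x - z) →
      (t - x) * ((z - y) * gt - (x - y)) = (x - y) * (x - z) →
      ((z - y) * gs - (x - y) ≠ 0) → gs ≠ gt := by
    intro s t gs gt hst hs ht hδ hg
    subst hg
    apply hst
    have h' := mul_right_cancel₀ hδ (hs.trans ht.symm)
    linear_combination h'
  have hg12 : g₁ ≠ g₂ := hgne ht12 h1 h2 hδ1
  have hg23 : g₂ ≠ g₃ := hgne ht23 h2 h3 hδ2
  have hden : (t₁ - t₃) * (g₂ - g₁) ≠ 0 :=
    mul_ne_zero (sub_ne_zero.2 ht13) (sub_ne_zero.2 hg12.symm)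
  have hE : ((z - y) * g₁ - (x - y)) * (((z - y) * g₃ - (x - y)) * ((t₁ - t₃) * (g₂ - g₁))) =
      ((z - y) * g₁ - (x - y)) * ((t₁ - t₂) * (g₃ - g₁) * ((z - y) * g₂ - (x - y))) := by
    linear_combination ((g₂ - g₁) * ((z - y) * g₃ - (x - y)) - (g₃ - g₁) * ((z - y) * g₂ - (x - y))) * h1
      - (g₂ - g₁) * ((z - y) * g₁ - (x - y)) * h3
      + (g₃ - g₁) * ((z - y) * g₁ - (x - y)) * h2
  have hE' := mul_left_cancel₀ hδ1 hE
  refine core_lemma G hzy hg₂ hg₃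
    (G.div_mem (G.mul_mem hm12 (G.sub_mem hg₃ hg₁)) (G.mul_mem hm13 (G.sub_mem hg₂ hg₁))) hg23 ?_ hr
  rw [div_mul_eq_mul_div, eq_div_iff hden]
  linear_combination hE'

theorem stmt_3 {F : Type*} [Field F] (lam : ℝ) (hlam : 0 < lam)
    (A B : Set F) (hB : B.Finite) (hA : IsStrongAntifield lam A)
    (τ : F → F) (hmaps : Set.MapsTo τ B A) (hinj : Set.InjOn τ B)
    (hcr : ∀ b₁ ∈ B, ∀ b₂ ∈ B, ∀ b₃ ∈ B, ∀ b₄ ∈ B, b₁ ≠ b₄ → b₂ ≠ b₃ →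
      crossRatio (τ b₁) (τ b₂) (τ b₃) (τ b₄) = crossRatio b₁ b₂ b₃ b₄) :
    IsAntifield lam B := by
  classical
  intro G hGfin a b
  set M := max lam (Real.sqrt ((G : Set F).ncard)) with hMdef
  by_contra hcon
  push_neg at hcon
  set C := B ∩ (fun g => a * g + b) '' (G : Set F) with hCdef
  have hCfin : C.Finite := hB.inter_of_left _
  have hCB : C ⊆ B := Set.inter_subset_left
  -- |G| ≥ 2
  have hG2 : 2 ≤ (G : Set F).ncard := by
    have h01 : ({0, 1} : Set F) ⊆ (G : Set F) := by
      intro t ht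
      rcases ht with rfl | ht
      · exact G.zero_mem
      · rw [Set.mem_singleton_iff] at ht; rw [ht]; exact G.one_mem
    have := Set.ncard_le_ncard h01 hGfin
    rwa [Set.ncard_pair (zero_ne_one)] at this
  have hM1 : 1 < M := by
    have h2 : (1 : ℝ) < Real.sqrt ((G : Set F).ncard) := by
      rw [Real.lt_sqrt (by norm_num)]
      have : (2 : ℝ) ≤ ((G : Set F).ncard : ℝ) := by exact_mod_cast hG2
      nlinarith
    exact lt_of_lt_of_le h2 (le_max_right _ _)
  -- a ≠ 0
  have ha : a ≠ 0 := by
    intro ha0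
    have hsub : C ⊆ {b} := by
      rintro s ⟨-, g, -, rfl⟩
      simp [ha0]
    have h1 : C.ncard ≤ 1 := by
      have := Set.ncard_le_ncard hsub (Set.finite_singleton b)
      simpa using this
    have : (C.ncard : ℝ) ≤ 1 := by exact_mod_cast h1
    linarith
  -- lam ≤ |G|
  have hlamG : lam ≤ ((G : Set F).ncard : ℝ) := by
    by_contra h
    push_neg at h
    have hle : C.ncard ≤ (G : Set F).ncard :=
      le_trans (Set.ncard_le_ncard Set.inter_subset_right (hGfin.image _))
        (Set.ncard_image_le hGfin)
    have h1 : (C.ncard : ℝ) ≤ ((G : Set F).ncard : ℝ) := by exact_mod_cast hle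
    have h2 : lam ≤ M := le_max_left _ _
    linarith
  obtain ⟨n, hnM, hTn⟩ := hA.2 G hGfin hlamG
  by_cases h2C : 2 < C.ncard
  · -- main case: three distinct points
    obtain ⟨u, hu, v, hv, w, hw, huv, huw, hvw⟩ := (Set.two_lt_ncard hCfin).1 h2C
    set x := τ u with hxdef
    set y := τ v with hydef
    set z := τ w with hzdef
    have tne : ∀ {p q : F}, p ∈ C → q ∈ C → p ≠ q → τ p ≠ τ q :=
      fun hp hq hpq h => hpq (hinj (hCB hp) (hCB hq) h)
    have hxy0 : x - y ≠ 0 := sub_ne_zero.2 (tne hu hv huv)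
    have hxz0 : x - z ≠ 0 := sub_ne_zero.2 (tne hu hw huw)
    have hzy0 : z - y ≠ 0 := sub_ne_zero.2 (tne hw hv (fun h => hvw h.symm))
    -- cross ratios lie in G
    have hcrmem : ∀ s ∈ C, s ≠ u → crossRatio x y z (τ s) ∈ G := by
      intro s hs hsu
      rw [hxdef, hydef, hzdef,
        hcr u (hCB hu) v (hCB hv) w (hCB hw) s (hCB hs) (fun h => hsu h.symm) hvw]
      obtain ⟨-, g₁, hg₁, hge₁⟩ := hu
      obtain ⟨-, g₂, hg₂, hge₂⟩ := hv
      obtain ⟨-, g₃, hg₃, hge₃⟩ := hw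
      obtain ⟨-, g₄, hg₄, hge₄⟩ := hs
      have h14 : g₁ ≠ g₄ := by
        intro h; exact hsu (by rw [← hge₄, ← hge₁, h])
      have h32 : g₃ ≠ g₂ := by
        intro h; exact hvw (by rw [← hge₂, ← hge₃, h])
      have hd2 : (g₁ - g₄) * (g₃ - g₂) ≠ 0 :=
        mul_ne_zero (sub_ne_zero.2 h14) (sub_ne_zero.2 h32)
      have hd1 : ((a * g₁ + b) - (a * g₄ + b)) * ((a * g₃ + b) - (a * g₂ + b)) ≠ 0 := by
        have he : ((a * g₁ + b) - (a * g₄ + b)) * ((a * g₃ + b) - (a * g₂ + b))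
            = a ^ 2 * ((g₁ - g₄) * (g₃ - g₂)) := by ring
        rw [he]
        exact mul_ne_zero (pow_ne_zero 2 ha) hd2
      have key : crossRatio u v w s = (g₁ - g₂) * (g₃ - g₄) / ((g₁ - g₄) * (g₃ - g₂)) := by
        rw [← hge₁, ← hge₂, ← hge₃, ← hge₄, crossRatio, div_eq_div_iff hd1 hd2]
        ring
      rw [key]
      exact G.div_mem (G.mul_mem (G.sub_mem hg₁ hg₂) (G.sub_mem hg₃ hg₄))
        (G.mul_mem (G.sub_mem hg₁ hg₄) (G.sub_mem hg₃ hg₂))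
    have hstar : ∀ s ∈ C, s ≠ u →
        (τ s - x) * ((z - y) * crossRatio x y z (τ s) - (x - y)) = (x - y) * (x - z) := by
      intro s hs hsu
      have hxt : x - τ s ≠ 0 :=
        sub_ne_zero.2 (fun h => hsu (hinj (hCB hs) (hCB hu) h.symm))
      have hd : (x - τ s) * (z - y) ≠ 0 := mul_ne_zero hxt hzy0
      have e1 : ((x - y) * (z - τ s) / ((x - τ s) * (z - y))) * ((x - τ s) * (z - y))
          = (x - y) * (z - τ s) := div_mul_cancel₀ _ hd
      simp only [crossRatio]
      linear_combination -e1
    by_cases hrG : (x - y) / (z - y) ∈ G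
    · -- affine case
      set c' := (x - y) * (x - z) / (z - y) with hc'def
      have himg : ∀ s ∈ C, τ s ∈ (fun t => c' * t + x) '' (G : Set F) := by
        intro s hs
        by_cases hsu : s = u
        · exact ⟨0, G.zero_mem, by rw [hsu]; simp [hxdef]⟩
        · have hg := hcrmem s hs hsu
          have hst := hstar s hs hsu
          set g := crossRatio x y z (τ s) with hgdef
          have hδ : (z - y) * g - (x - y) ≠ 0 := by
            intro h
            rw [h, mul_zero] at hst
            exact (mul_ne_zero hxy0 hxz0) hst.symm
          have hgr : g - (x - y) / (z - y) ≠ 0 := by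
            intro h
            apply hδ
            have he : (z - y) * g - (x - y) = (z - y) * (g - (x - y) / (z - y)) := by
              field_simp
            rw [he, h, mul_zero]
          refine ⟨(z - y) / ((z - y) * g - (x - y)), ?_, ?_⟩
          · have hγ : (g - (x - y) / (z - y)) * ((z - y) / ((z - y) * g - (x - y))) = 1 := by
              field_simp
              have hD : g * z - g * y + y - x ≠ 0 := fun h => hδ (by linear_combination h)
              linear_combination mul_inv_cancel₀ hD
            rw [← inv_eq_of_mul_eq_one_right hγ]
            exact G.inv_mem (G.sub_mem hg hrG)
          · show c' * ((z - y) / ((z - y) * g - (x - y))) + x = τ s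
            have hts : τ s - x = (x - y) * (x - z) / ((z - y) * g - (x - y)) := by
              rw [eq_div_iff hδ]; exact hst
            rw [hc'def, div_mul_div_comm, mul_comm ((x - y) * (x - z)) (z - y),
              mul_div_mul_left _ _ hzy0, ← hts]
            ring
      have hsubset : τ '' C ⊆ A ∩ ((fun t => c' * t + x) '' (G : Set F)) := by
        rintro t ⟨s, hs, rfl⟩
        exact ⟨hmaps (hCB hs), himg s hs⟩
      have hNeq : (τ '' C).ncard = C.ncard := Set.ncard_image_of_injOn (hinj.mono hCB)
      have hfin2 : (A ∩ ((fun t => c' * t + x) '' (G : Set F))).Finite :=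
        (hGfin.image _).inter_of_right _
      have hle := Set.ncard_le_ncard hsubset hfin2
      have hM' := hA.1 G hGfin c' x
      rw [hNeq] at hle
      have h1 : (C.ncard : ℝ) ≤ ((A ∩ ((fun t => c' * t + x) '' (G : Set F))).ncard : ℝ) := by
        exact_mod_cast hle
      linarith
    · -- inversion case
      have hψdiff : ∀ p q : F,
          (fun g => g + p) '' (G : Set F) = (fun g => g + q) '' (G : Set F) → p - q ∈ G := by
        intro p q h
        have hp : p ∈ (fun g => g + p) '' (G : Set F) := ⟨0, G.zero_mem, zero_add p⟩
        rw [h] at hp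
        obtain ⟨g, hg, hgq⟩ := hp
        have he : p - q = g := by rw [← hgq]; ring
        rw [he]; exact hg
      set ψ : F → Set F := fun s => (fun g => g + τ s) '' (G : Set F) with hψdef
      have key3 : ∀ s₁ ∈ C, ∀ s₂ ∈ C, ∀ s₃ ∈ C, s₁ ≠ s₂ → s₁ ≠ s₃ → s₂ ≠ s₃ →
          ψ s₁ = ψ s₂ → ψ s₁ = ψ s₃ → False := by
        intro s₁ hs₁ s₂ hs₂ s₃ hs₃ h12 h13 h23 he12 he13
        have d12 : τ s₁ - τ s₂ ∈ G := hψdiff _ _ he12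
        have d13 : τ s₁ - τ s₃ ∈ G := hψdiff _ _ he13
        by_cases e1 : s₁ = u
        · have h2u : s₂ ≠ u := fun h => h12 (e1.trans h.symm)
          have h3u : s₃ ≠ u := fun h => h13 (e1.trans h.symm)
          have hx1 : τ s₁ = x := by rw [e1]
          have m2 : τ s₂ - x ∈ G := by
            rw [← hx1, ← neg_sub (τ s₁) (τ s₂)]
            exact G.neg_mem d12
          have m3 : τ s₃ - x ∈ G := by
            rw [← hx1, ← neg_sub (τ s₁) (τ s₃)]
            exact G.neg_mem d13
          exact subA G hxy0 hxz0 hzy0 (hcrmem s₂ hs₂ h2u) (hcrmem s₃ hs₃ h3u)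
            (hstar s₂ hs₂ h2u) (hstar s₃ hs₃ h3u) (tne hs₂ hs₃ h23) m2 m3 hrG
        · by_cases e2 : s₂ = u
          · have h3u : s₃ ≠ u := fun h => h23 (e2.trans h.symm)
            have hx2 : τ s₂ = x := by rw [e2]
            have m1 : τ s₁ - x ∈ G := by rw [← hx2]; exact d12
            have m3 : τ s₃ - x ∈ G := by
              have he : τ s₃ - x = (τ s₁ - x) - (τ s₁ - τ s₃) := by ring
              rw [he]; exact G.sub_mem m1 d13
            exact subA G hxy0 hxz0 hzy0 (hcrmem s₁ hs₁ e1) (hcrmem s₃ hs₃ h3u)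
              (hstar s₁ hs₁ e1) (hstar s₃ hs₃ h3u) (tne hs₁ hs₃ h13) m1 m3 hrG
          · by_cases e3 : s₃ = u
            · have hx3 : τ s₃ = x := by rw [e3]
              have m1 : τ s₁ - x ∈ G := by rw [← hx3]; exact d13
              have m2 : τ s₂ - x ∈ G := by
                have he : τ s₂ - x = (τ s₁ - x) - (τ s₁ - τ s₂) := by ring
                rw [he]; exact G.sub_mem m1 d12
              exact subA G hxy0 hxz0 hzy0 (hcrmem s₁ hs₁ e1) (hcrmem s₂ hs₂ e2)
                (hstar s₁ hs₁ e1) (hstar s₂ hs₂ e2) (tne hs₁ hs₂ h12) m1 m2 hrG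
            · exact subB G hxy0 hxz0 hzy0 (hcrmem s₁ hs₁ e1) (hcrmem s₂ hs₂ e2)
                (hcrmem s₃ hs₃ e3) (hstar s₁ hs₁ e1) (hstar s₂ hs₂ e2) (hstar s₃ hs₃ e3)
                (tne hs₁ hs₂ h12) (tne hs₁ hs₃ h13) (tne hs₂ hs₃ h23) d12 d13 hrG
      set Cf := hCfin.toFinset with hCf
      have hCfcard : Cf.card = C.ncard := (Set.ncard_eq_toFinset_card C hCfin).symm
      have hfib : ∀ T ∈ Cf.image ψ, (Cf.filter fun s => ψ s = T).card ≤ 2 := by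
        intro T _
        by_contra hgt
        push_neg at hgt
        obtain ⟨s₁, s₂, s₃, h1, h2, h3, h12, h13, h23⟩ := Finset.two_lt_card_iff.1 hgt
        rw [Finset.mem_filter, Set.Finite.mem_toFinset] at h1 h2 h3
        exact key3 s₁ h1.1 s₂ h2.1 s₃ h3.1 h12 h13 h23
          (h1.2.trans h2.2.symm) (h1.2.trans h3.2.symm)
      have hcount := Finset.card_le_mul_card_image Cf 2 hfib
      have himsub : ↑(Cf.image ψ) ⊆ {S : Set F | (∃ b : F, S = (fun g => g + b) '' (G : Set F)) ∧
          (A ∩ S).Nonempty} := by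
        intro T hT
        rw [Finset.coe_image] at hT
        obtain ⟨s, hs, rfl⟩ := hT
        rw [Finset.mem_coe, Set.Finite.mem_toFinset] at hs
        exact ⟨⟨τ s, rfl⟩, ⟨τ s, hmaps (hCB hs), 0, G.zero_mem, zero_add _⟩⟩
      have hicard : (Cf.image ψ).card ≤ n := by
        have h1 : (↑(Cf.image ψ) : Set (Set F)).encard ≤ (n : ℕ∞) :=
          le_trans (Set.encard_mono himsub) hTn
        rw [Set.encard_coe_eq_coe_finsetCard] at h1
        exact_mod_cast h1
      have hfin3 : C.ncard ≤ 2 * n := by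
        rw [← hCfcard]
        exact le_trans hcount (Nat.mul_le_mul_left 2 hicard)
      have h1 : (C.ncard : ℝ) ≤ 2 * n := by exact_mod_cast hfin3
      linarith
  · -- |C| = 2 case
    push_neg at h2C
    have h1C : 1 < C.ncard := by
      by_contra h
      push_neg at h
      have : (C.ncard : ℝ) ≤ 1 := by exact_mod_cast h
      linarith
    obtain ⟨p, hp, q, hq, hpq⟩ := (Set.one_lt_ncard hCfin).1 h1C
    have hτpq : τ p ≠ τ q := fun h => hpq (hinj (hCB hp) (hCB hq) h)
    have hsub : {τ p, τ q} ⊆ A ∩ (fun g => (τ q - τ p) * g + τ p) '' (G : Set F) := by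
      intro t ht
      rcases ht with rfl | ht
      · exact ⟨hmaps (hCB hp), 0, G.zero_mem, by ring⟩
      · rw [Set.mem_singleton_iff] at ht
        rw [ht]
        exact ⟨hmaps (hCB hq), 1, G.one_mem, by ring⟩
    have h2le : 2 ≤ (A ∩ (fun g => (τ q - τ p) * g + τ p) '' (G : Set F)).ncard := by
      rw [← Set.ncard_pair hτpq]
      exact Set.ncard_le_ncard hsub ((hGfin.image _).inter_of_right _)
    have hM' := hA.1 G hGfin (τ q - τ p) (τ p)
    have h2le' : (2 : ℝ) ≤ ((A ∩ (fun g => (τ q - τ p) * g + τ p) '' (G : Set F)).ncard : ℝ) := by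
      exact_mod_cast h2le
    have hC2 : (C.ncard : ℝ) ≤ 2 := by exact_mod_cast h2C
    linarith
end

section
/- Let F be a field, Z ⊆ F a finite set, and R(Z) = (Z−Z)/(Z−Z) the set of ratios (z₁−z₂)/(z₃−z₄) with z₁,z₂,z₃,z₄ ∈ Z and z₃ ≠ z₄. If x ∈ F but x ∉ R(Z), then |Z + xZ| ≥ |Z|(|Z|−1)/2, where Z + xZ = {z₁ + x z₂ : z₁, z₂ ∈ Z}. -/
/-- The ratio set `R(Z) = (Z − Z)/(Z − Z)`. -/
def ratioSet {F : Type*} [Field F] (Z : Finset F) : Set F :=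
  {r | ∃ z₁ ∈ Z, ∃ z₂ ∈ Z, ∃ z₃ ∈ Z, ∃ z₄ ∈ Z, z₃ ≠ z₄ ∧ r = (z₁ - z₂) / (z₃ - z₄)}

theorem stmt_5 {F : Type*} [Field F] [DecidableEq F] (Z : Finset F) (hZ : 2 ≤ Z.card)
    (x : F) (hx : x ∉ ratioSet Z) :
    (Z.card : ℝ) * (Z.card - 1) / 2 ≤
      (((Z ×ˢ Z).image (fun p => p.1 + x * p.2)).card : ℝ) := by
  have hinj : Set.InjOn (fun p : F × F => p.1 + x * p.2) ((Z ×ˢ Z : Finset (F × F)) : Set (F × F)) := by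
    rintro ⟨a, b⟩ hab ⟨c, d⟩ hcd h
    simp only [Finset.coe_product, Set.mem_prod, Finset.mem_coe] at hab hcd
    simp only at h
    by_cases hbd : b = d
    · subst hbd
      have : a = c := by linear_combination h
      simp [this]
    · exfalso
      apply hx
      refine ⟨c, hcd.1, a, hab.1, b, hab.2, d, hcd.2, hbd, ?_⟩
      have hne : b - d ≠ 0 := sub_ne_zero.mpr hbd
      field_simp
      linear_combination h
  rw [Finset.card_image_of_injOn hinj, Finset.card_product]
  have h2 : (2:ℝ) ≤ Z.card := by exact_mod_cast hZ
  push_cast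
  nlinarith
end

section
/- Let F be a field and Z ⊆ F a finite set such that R(Z) = (Z−Z)/(Z−Z) is not closed under multiplication. Then there exist elements x₁,x₂,b₁,b₂,b₃,b₄ ∈ Z (with appropriate nonvanishing denominators) such that (x₁−x₂)/x₁ · (b₁−b₂)/(b₃−b₄) ∉ R(Z); consequently, for every Z' ⊆ Z, |Z'|·(|Z'|−1)/2 ≤ |x₁(b₁−b₂)Z' − x₂(b₁−b₂)Z' + x₁(b₃−b₄)Z'|. -/
lemma ratioSet_zero {F : Type*} [Field F] {Z : Finset F} {u v : F}
    (hu : u ∈ Z) (hv : v ∈ Z) (huv : u ≠ v) : (0 : F) ∈ ratioSet Z :=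
  ⟨u, hu, u, hu, u, hu, v, hv, huv, by simp⟩

lemma ratioSet_neg {F : Type*} [Field F] {Z : Finset F} {t : F}
    (ht : t ∈ ratioSet Z) : -t ∈ ratioSet Z := by
  obtain ⟨z₁, h₁, z₂, h₂, z₃, h₃, z₄, h₄, hne, rfl⟩ := ht
  exact ⟨z₂, h₂, z₁, h₁, z₃, h₃, z₄, h₄, hne, by ring⟩

lemma ratioSet_inv {F : Type*} [Field F] {Z : Finset F} {t : F}
    (ht : t ∈ ratioSet Z) : t⁻¹ ∈ ratioSet Z := by
  obtain ⟨z₁, h₁, z₂, h₂, z₃, h₃, z₄, h₄, hne, rfl⟩ := ht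
  rcases eq_or_ne z₁ z₂ with h | h
  · subst h
    simp only [sub_self, zero_div, inv_zero]
    exact ratioSet_zero h₃ h₄ hne
  · exact ⟨z₃, h₃, z₄, h₄, z₁, h₁, z₂, h₂, h, by rw [inv_div]⟩

lemma ratioSet_mulA {F : Type*} [Field F] {Z : Finset F}
    (Hc : ∀ x₁ ∈ Z, ∀ x₂ ∈ Z, ∀ c₁ ∈ Z, ∀ c₂ ∈ Z, ∀ c₃ ∈ Z, ∀ c₄ ∈ Z,
      x₁ ≠ 0 → c₃ ≠ c₄ → (x₁ - x₂) / x₁ * ((c₁ - c₂) / (c₃ - c₄)) ∈ ratioSet Z)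
    {x y t : F} (hx : x ∈ Z) (hy : y ∈ Z) (hx0 : x ≠ 0)
    (ht : t ∈ ratioSet Z) : (x - y) / x * t ∈ ratioSet Z := by
  obtain ⟨z₁, h₁, z₂, h₂, z₃, h₃, z₄, h₄, hne, rfl⟩ := ht
  exact Hc x hx y hy z₁ h₁ z₂ h₂ z₃ h₃ z₄ h₄ hx0 hne

lemma ratioSet_mulB {F : Type*} [Field F] {Z : Finset F}
    (Hc : ∀ x₁ ∈ Z, ∀ x₂ ∈ Z, ∀ c₁ ∈ Z, ∀ c₂ ∈ Z, ∀ c₃ ∈ Z, ∀ c₄ ∈ Z,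
      x₁ ≠ 0 → c₃ ≠ c₄ → (x₁ - x₂) / x₁ * ((c₁ - c₂) / (c₃ - c₄)) ∈ ratioSet Z)
    {x y t : F} (hx : x ∈ Z) (hy : y ∈ Z) (hx0 : x ≠ 0) (hxy : x ≠ y)
    (ht : t ∈ ratioSet Z) : x / (x - y) * t ∈ ratioSet Z := by
  rcases eq_or_ne t 0 with rfl | ht0
  · simpa using ratioSet_zero hx hy hxy
  · have h1 : (x - y) / x * t⁻¹ ∈ ratioSet Z := ratioSet_mulA Hc hx hy hx0 (ratioSet_inv ht)
    have h2 := ratioSet_inv h1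
    have hxy' : x - y ≠ 0 := sub_ne_zero.mpr hxy
    have : ((x - y) / x * t⁻¹)⁻¹ = x / (x - y) * t := by
      field_simp
    rwa [this] at h2

theorem stmt_6 {F : Type*} [Field F] [DecidableEq F] (Z : Finset F)
    (h : ∃ r ∈ ratioSet Z, ∃ s ∈ ratioSet Z, r * s ∉ ratioSet Z) :
    ∃ x₁ ∈ Z, ∃ x₂ ∈ Z, ∃ b₁ ∈ Z, ∃ b₂ ∈ Z, ∃ b₃ ∈ Z, ∃ b₄ ∈ Z,
      x₁ ≠ 0 ∧ b₃ ≠ b₄ ∧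
      (x₁ - x₂) / x₁ * ((b₁ - b₂) / (b₃ - b₄)) ∉ ratioSet Z ∧
      ∀ Z' ⊆ Z,
        (Z'.card : ℝ) * (Z'.card - 1) / 2 ≤
          (((Z' ×ˢ Z' ×ˢ Z').image
            (fun q => x₁ * (b₁ - b₂) * q.1 - x₂ * (b₁ - b₂) * q.2.1
              + x₁ * (b₃ - b₄) * q.2.2)).card : ℝ) := by
  classical
  -- Step 1: existence of the tuple with the non-membership property
  have main : ∃ x₁ ∈ Z, ∃ x₂ ∈ Z, ∃ b₁ ∈ Z, ∃ b₂ ∈ Z, ∃ b₃ ∈ Z, ∃ b₄ ∈ Z,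
      x₁ ≠ 0 ∧ b₃ ≠ b₄ ∧
      (x₁ - x₂) / x₁ * ((b₁ - b₂) / (b₃ - b₄)) ∉ ratioSet Z := by
    by_contra hno
    push_neg at hno
    have Hc : ∀ x₁ ∈ Z, ∀ x₂ ∈ Z, ∀ c₁ ∈ Z, ∀ c₂ ∈ Z, ∀ c₃ ∈ Z, ∀ c₄ ∈ Z,
        x₁ ≠ 0 → c₃ ≠ c₄ →
        (x₁ - x₂) / x₁ * ((c₁ - c₂) / (c₃ - c₄)) ∈ ratioSet Z := by
      intro x₁ h1 x₂ h2 c₁ h3 c₂ h4 c₃ h5 c₄ h6 hx0 hc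
      exact hno x₁ h1 x₂ h2 c₁ h3 c₂ h4 c₃ h5 c₄ h6 hx0 hc
    obtain ⟨r, hr, s, hs, hrs⟩ := h
    obtain ⟨a₁, ha₁, a₂, ha₂, a₃, ha₃, a₄, ha₄, ha34, hreq⟩ := hr
    have h0 : (0 : F) ∈ ratioSet Z := ratioSet_zero ha₃ ha₄ ha34
    have hrs0 : r * s ≠ 0 := fun hz => hrs (hz ▸ h0)
    have hr0 : r ≠ 0 := left_ne_zero_of_mul hrs0
    have hs0 : s ≠ 0 := right_ne_zero_of_mul hrs0
    have ha12 : a₁ ≠ a₂ := by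
      rintro rfl; exact hr0 (by simp [hreq])
    -- key lemma with nonvanishing assumptions
    have key : ∀ c₁ c₂ c₃ c₄ : F, c₁ ∈ Z → c₂ ∈ Z → c₃ ∈ Z → c₄ ∈ Z →
        c₁ ≠ 0 → c₃ ≠ 0 → c₃ ≠ c₄ →
        (c₁ - c₂) / (c₃ - c₄) * s ∈ ratioSet Z := by
      intro c₁ c₂ c₃ c₄ hc₁ hc₂ hc₃ hc₄ h10 h30 h34
      have h34' : c₃ - c₄ ≠ 0 := sub_ne_zero.mpr h34
      have step1 : c₁ / c₃ * s ∈ ratioSet Z := by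
        rcases eq_or_ne c₁ c₃ with rfl | h13
        · simpa [div_self h30] using hs
        · have t1 : c₁ / (c₁ - c₃) * s ∈ ratioSet Z :=
            ratioSet_mulB Hc hc₁ hc₃ h10 h13 hs
          have t2 : (c₃ - c₁) / c₃ * (c₁ / (c₁ - c₃) * s) ∈ ratioSet Z :=
            ratioSet_mulA Hc hc₃ hc₁ h30 t1
          have t3 := ratioSet_neg t2
          have h13' : c₁ - c₃ ≠ 0 := sub_ne_zero.mpr h13
          have : -((c₃ - c₁) / c₃ * (c₁ / (c₁ - c₃) * s)) = c₁ / c₃ * s := by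
            field_simp; ring
          rwa [this] at t3
      have step2 : c₃ / (c₃ - c₄) * (c₁ / c₃ * s) ∈ ratioSet Z :=
        ratioSet_mulB Hc hc₃ hc₄ h30 h34 step1
      have step3 : (c₁ - c₂) / c₁ * (c₃ / (c₃ - c₄) * (c₁ / c₃ * s)) ∈ ratioSet Z :=
        ratioSet_mulA Hc hc₁ hc₂ h10 step2
      have : (c₁ - c₂) / c₁ * (c₃ / (c₃ - c₄) * (c₁ / c₃ * s)) =
          (c₁ - c₂) / (c₃ - c₄) * s := by
        field_simp
      rwa [this] at step3
    -- now remove the nonvanishing assumptions by sign flips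
    have final : r * s ∈ ratioSet Z := by
      subst hreq
      rcases eq_or_ne a₁ 0 with rfl | h10
      · have h20 : a₂ ≠ 0 := fun hz => ha12 (hz ▸ rfl)
        rcases eq_or_ne a₃ 0 with rfl | h30
        · have h40 : a₄ ≠ 0 := fun hz => ha34 (hz ▸ rfl)
          have := key a₂ 0 a₄ 0 ha₂ ha₁ ha₄ ha₃ h20 h40 (Ne.symm ha34)
          have e : (a₂ - 0) / (a₄ - 0) * s = (0 - a₂) / (0 - a₄) * s := by
            rw [zero_sub, zero_sub, neg_div_neg_eq, sub_zero, sub_zero]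
          rwa [e] at this
        · have := ratioSet_neg (key a₂ 0 a₃ a₄ ha₂ ha₁ ha₃ ha₄ h20 h30 ha34)
          have e : -((a₂ - 0) / (a₃ - a₄) * s) = (0 - a₂) / (a₃ - a₄) * s := by
            ring
          rwa [e] at this
      · rcases eq_or_ne a₃ 0 with rfl | h30
        · have h40 : a₄ ≠ 0 := fun hz => ha34 (hz ▸ rfl)
          have := ratioSet_neg (key a₁ a₂ a₄ 0 ha₁ ha₂ ha₄ ha₃ h10 h40 (Ne.symm ha34))
          have e : -((a₁ - a₂) / (a₄ - 0) * s) = (a₁ - a₂) / (0 - a₄) * s := by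
            rw [zero_sub, div_neg]; ring
          rwa [e] at this
        · exact key a₁ a₂ a₃ a₄ ha₁ ha₂ ha₃ ha₄ h10 h30 ha34
    exact hrs final
  -- Step 2: counting
  obtain ⟨x₁, hx₁, x₂, hx₂, b₁, hb₁, b₂, hb₂, b₃, hb₃, b₄, hb₄, hx0, hb34, hnot⟩ := main
  refine ⟨x₁, hx₁, x₂, hx₂, b₁, hb₁, b₂, hb₂, b₃, hb₃, b₄, hb₄, hx0, hb34, hnot, ?_⟩
  intro Z' hZ'
  set f : F × F × F → F := fun q => x₁ * (b₁ - b₂) * q.1 - x₂ * (b₁ - b₂) * q.2.1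
    + x₁ * (b₃ - b₄) * q.2.2 with hf
  set g : F × F → F := fun p => x₁ * (b₁ - b₂) * p.1 - x₂ * (b₁ - b₂) * p.1
    + x₁ * (b₃ - b₄) * p.2 with hg
  have hB : x₁ * (b₃ - b₄) ≠ 0 := mul_ne_zero hx0 (sub_ne_zero.mpr hb34)
  have hinj : Set.InjOn g ↑(Z' ×ˢ Z') := by
    rintro ⟨z, w⟩ hp ⟨z', w'⟩ hq hpq
    simp only [Finset.coe_product, Set.mem_prod, Finset.mem_coe] at hp hq
    simp only [hg] at hpq
    rcases eq_or_ne z z' with rfl | hzz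
    · have : x₁ * (b₃ - b₄) * w = x₁ * (b₃ - b₄) * w' := by linear_combination hpq
      have := mul_left_cancel₀ hB this
      simp [this]
    · exfalso
      apply hnot
      refine ⟨w', hZ' hq.2, w, hZ' hp.2, z, hZ' hp.1, z', hZ' hq.1, hzz, ?_⟩
      have hz' : z - z' ≠ 0 := sub_ne_zero.mpr hzz
      field_simp
      linear_combination hpq
  have hsub : (Z' ×ˢ Z').image g ⊆ (Z' ×ˢ Z' ×ˢ Z').image f := by
    intro y hy
    simp only [Finset.mem_image, Finset.mem_product] at hy ⊢
    obtain ⟨⟨z, w⟩, ⟨hz, hw⟩, rfl⟩ := hy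
    exact ⟨(z, z, w), ⟨hz, hz, hw⟩, rfl⟩
  have hcard : ((Z' ×ˢ Z').image g).card = Z'.card * Z'.card := by
    rw [Finset.card_image_of_injOn hinj, Finset.card_product]
  have h1 : Z'.card * Z'.card ≤ ((Z' ×ˢ Z' ×ˢ Z').image f).card := by
    rw [← hcard]; exact Finset.card_le_card hsub
  have h1' : (Z'.card * Z'.card : ℝ) ≤ (((Z' ×ˢ Z' ×ˢ Z').image f).card : ℝ) := by
    exact_mod_cast h1
  nlinarith [Nat.cast_nonneg (α := ℝ) Z'.card]
end

section
/- Let F be a field and Z ⊆ F a finite set such that R(Z) = (Z−Z)/(Z−Z) is closed under multiplication but not closed under addition. Then there exist c₁,c₂,c₃,c₄ ∈ Z with c₃ ≠ c₄ such that (c₁−c₂)/(c₃−c₄) + 1 ∉ R(Z); consequently for every Z' ⊆ Z, |Z'|(|Z'|−1)/2 ≤ |(c₁−c₂)Z' + (c₃−c₄)Z' + (c₃−c₄)Z'|. -/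
theorem stmt_7 {F : Type*} [Field F] [DecidableEq F] (Z : Finset F)
    (hmul : ∀ r ∈ ratioSet Z, ∀ s ∈ ratioSet Z, r * s ∈ ratioSet Z)
    (hadd : ∃ r ∈ ratioSet Z, ∃ s ∈ ratioSet Z, r + s ∉ ratioSet Z) :
    ∃ c₁ ∈ Z, ∃ c₂ ∈ Z, ∃ c₃ ∈ Z, ∃ c₄ ∈ Z, c₃ ≠ c₄ ∧
      (c₁ - c₂) / (c₃ - c₄) + 1 ∉ ratioSet Z ∧
      ∀ Z' ⊆ Z,
        (Z'.card : ℝ) * (Z'.card - 1) / 2 ≤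
          (((Z' ×ˢ Z' ×ˢ Z').image
            (fun q => (c₁ - c₂) * q.1 + (c₃ - c₄) * q.2.1
              + (c₃ - c₄) * q.2.2)).card : ℝ) := by
  obtain ⟨r, hr, s, hs, hrs⟩ := hadd
  have hs0 : s ≠ 0 := by
    rintro rfl
    exact hrs (by simpa using hr)
  obtain ⟨b₁, hb₁, b₂, hb₂, b₃, hb₃, b₄, hb₄, hb34, hseq⟩ := hs
  have hb12 : b₁ ≠ b₂ := by
    rintro rfl
    exact hs0 (by simp [hseq])
  have hsinv : s⁻¹ ∈ ratioSet Z := by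
    refine ⟨b₃, hb₃, b₄, hb₄, b₁, hb₁, b₂, hb₂, hb12, ?_⟩
    rw [hseq, inv_div]
  have hsmem : s ∈ ratioSet Z := ⟨b₁, hb₁, b₂, hb₂, b₃, hb₃, b₄, hb₄, hb34, hseq⟩
  obtain ⟨c₁, hc₁, c₂, hc₂, c₃, hc₃, c₄, hc₄, hc34, heq⟩ := hmul r hr s⁻¹ hsinv
  refine ⟨c₁, hc₁, c₂, hc₂, c₃, hc₃, c₄, hc₄, hc34, ?_, ?_⟩
  · intro h
    have hts := hmul _ h s hsmem
    have : ((c₁ - c₂) / (c₃ - c₄) + 1) * s = r + s := by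
      rw [← heq]
      field_simp
    rw [this] at hts
    exact hrs hts
  · -- counting part
    intro Z' hZ'
    set a := c₁ - c₂ with ha
    set b := c₃ - c₄ with hb
    have hb0 : b ≠ 0 := sub_ne_zero.mpr hc34
    have hnot : a / b + 1 ∉ ratioSet Z := by
      intro h
      have hts := hmul _ h s hsmem
      have : (a / b + 1) * s = r + s := by
        have : a / b = r * s⁻¹ := heq.symm
        rw [this]
        field_simp
      rw [this] at hts
      exact hrs hts
    set f : F × F → F := fun p => b * p.1 + (a + b) * p.2 with hf
    have hinj : Set.InjOn f ↑(Z' ×ˢ Z') := by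
      rintro ⟨u₁, v₁⟩ h1 ⟨u₂, v₂⟩ h2 hfeq
      simp only [Finset.mem_coe, Finset.mem_product] at h1 h2
      simp only [hf] at hfeq
      by_cases hv : v₁ = v₂
      · subst hv
        have : u₁ = u₂ := by
          have h' : b * u₁ = b * u₂ := by linear_combination hfeq
          exact mul_left_cancel₀ hb0 h'
        simp [this]
      · exfalso
        apply hnot
        refine ⟨u₂, hZ' h2.1, u₁, hZ' h1.1, v₁, hZ' h1.2, v₂, hZ' h2.2, hv, ?_⟩
        rw [div_add_one hb0, div_eq_div_iff hb0 (sub_ne_zero.mpr hv)]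
        linear_combination hfeq
    have hsub : (Z' ×ˢ Z').image f ⊆
        (Z' ×ˢ Z' ×ˢ Z').image
          (fun q : F × F × F => a * q.1 + b * q.2.1 + b * q.2.2) := by
      intro t ht
      simp only [Finset.mem_image, Finset.mem_product] at ht ⊢
      obtain ⟨⟨u, v⟩, ⟨hu, hv⟩, hft⟩ := ht
      refine ⟨⟨v, v, u⟩, ⟨hv, hv, hu⟩, ?_⟩
      simp only [hf] at hft
      rw [← hft]; ring
    have h1 : ((Z' ×ˢ Z').image f).card = Z'.card * Z'.card := by
      rw [Finset.card_image_of_injOn hinj, Finset.card_product]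
    have h2 := Finset.card_le_card hsub
    rw [h1] at h2
    have h2' : (Z'.card : ℝ) * Z'.card ≤
        (((Z' ×ˢ Z' ×ˢ Z').image
          (fun q : F × F × F => a * q.1 + b * q.2.1 + b * q.2.2)).card : ℝ) := by
      exact_mod_cast h2
    have hn : (0 : ℝ) ≤ (Z'.card : ℝ) := Nat.cast_nonneg _
    nlinarith [h2', hn]
end

section
/- Let F be a field and Z ⊆ F a finite set with at least two elements. If R(Z) = (Z−Z)/(Z−Z) is contained in a subfield G of F, then there exist a,b ∈ F with Z ⊆ aG + b. -/
theorem stmt_8 {F : Type*} [Field F] (Z : Finset F) (hZ : 2 ≤ Z.card)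
    (G : Subfield F) (hR : ratioSet Z ⊆ (G : Set F)) :
    ∃ a b : F, (Z : Set F) ⊆ (fun g => a * g + b) '' (G : Set F) := by
  obtain ⟨x, hx, y, hy, hxy⟩ := Finset.one_lt_card.mp hZ
  refine ⟨x - y, y, fun z hz => ?_⟩
  have hg : (z - y) / (x - y) ∈ (G : Set F) :=
    hR ⟨z, hz, y, hy, x, hx, y, hy, hxy, rfl⟩
  refine ⟨(z - y) / (x - y), hg, ?_⟩
  have hne : x - y ≠ 0 := sub_ne_zero.mpr hxy
  field_simp
  ring
end

section
/- Let F be a field with a (possibly infinite) structure of additive group; more generally let G be an abelian group, and let B, C ⊆ G be finite nonempty sets. For every ε ∈ (0,1), there exists a set T ⊆ G of translates with |T| ≤ C_ε · |B + C|/|C| (for a constant C_ε depending only on ε) such that |B ∩ ⋃_{t∈T}(C + t)| ≥ (1 − ε)|B|. -/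
open scoped Classical Pointwise

open Finset
open scoped Combinatorics.Additive

section Aux
variable {G : Type*} [AddCommGroup G] [DecidableEq G]

lemma fiber_card_aux (U C : Finset G) (t : G) :
    ((U ×ˢ C.image (fun c => -c)).filter fun p => p.1 + p.2 = t).card
      = (U.filter fun u => u - t ∈ C).card := by
  apply Finset.card_nbij' (i := fun p => p.1) (j := fun u => (u, t - u))
  · intro p hp; obtain ⟨u, c⟩ := p
    simp only [mem_coe, mem_filter, mem_product, mem_image] at hp ⊢
    obtain ⟨⟨hu, c', hc', rfl⟩, he⟩ := hp
    refine ⟨hu, ?_⟩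
    have : u - t = c' := by rw [← he]; abel
    rwa [this]
  · rintro u hu
    simp only [mem_coe, mem_filter, mem_product, mem_image] at hu ⊢
    exact ⟨⟨hu.1, ⟨u - t, hu.2, by abel⟩⟩, by abel⟩
  · intro p hp; obtain ⟨u, c⟩ := p
    simp only [mem_coe, mem_filter] at hp
    have : t - u = c := by rw [← hp.2]; abel
    simp [this]
  · intro u hu; rfl

lemma energy_neg_aux (U C : Finset G) :
    E[U, C.image (fun c => -c)] = E[U, C] := by
  unfold Finset.addEnergy
  apply Finset.card_nbij'
    (i := fun x => ((x.1.1, x.1.2), (-x.2.2, -x.2.1)))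
    (j := fun x => ((x.1.1, x.1.2), (-x.2.2, -x.2.1)))
  · intro x h; obtain ⟨⟨a₁, a₂⟩, b₁, b₂⟩ := x
    simp only [mem_coe, mem_filter, mem_product, mem_image] at h ⊢
    obtain ⟨⟨⟨ha₁, ha₂⟩, ⟨c₁, hc₁, rfl⟩, ⟨c₂, hc₂, rfl⟩⟩, he⟩ := h
    refine ⟨⟨⟨ha₁, ha₂⟩, by simpa using hc₂, by simpa using hc₁⟩, ?_⟩
    simp only [neg_neg]
    have : a₁ - c₁ = a₂ - c₂ := by
      rw [sub_eq_iff_eq_add]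
      calc a₁ = a₁ + -c₁ + c₁ := by abel
        _ = a₂ + -c₂ + c₁ := by rw [he]
        _ = a₂ - c₂ + c₁ := by abel
    calc a₁ + c₂ = (a₁ - c₁) + c₁ + c₂ := by abel
      _ = (a₂ - c₂) + c₁ + c₂ := by rw [this]
      _ = a₂ + c₁ := by abel
  · intro x h; obtain ⟨⟨a₁, a₂⟩, b₁, b₂⟩ := x
    simp only [mem_coe, mem_filter, mem_product, mem_image] at h ⊢
    obtain ⟨⟨⟨ha₁, ha₂⟩, hb₁, hb₂⟩, he⟩ := h
    refine ⟨⟨⟨ha₁, ha₂⟩, ⟨b₂, hb₂, rfl⟩, ⟨b₁, hb₁, rfl⟩⟩, ?_⟩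
    calc a₁ + -b₂ = a₁ + b₁ - b₁ - b₂ := by abel
      _ = a₂ + b₂ - b₁ - b₂ := by rw [he]
      _ = a₂ + -b₁ := by abel
  · rintro ⟨⟨a₁, a₂⟩, b₁, b₂⟩ _; simp
  · rintro ⟨⟨a₁, a₂⟩, b₁, b₂⟩ _; simp

/-- There is a translate `C + t` covering at least `|U||C|/|U+C|` elements of `U`. -/
lemma key_aux (U C : Finset G) (hU : U.Nonempty) (hC : C.Nonempty) :
    ∃ t : G, U.card * C.card ≤ (U.filter fun u => u - t ∈ C).card * (U + C).card := by
  classical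
  set C' : Finset G := C.image (fun c => -c) with hC'
  have hC'ne : C'.Nonempty := hC.image _
  have hS : (U + C').Nonempty := hU.add hC'ne
  set f : G → ℕ := fun t => (U.filter fun u => u - t ∈ C).card with hf
  obtain ⟨t₀, ht₀S, ht₀⟩ := (U + C').exists_max_image f hS
  refine ⟨t₀, ?_⟩
  -- sum of fibers
  have hsum : ∑ t ∈ U + C', f t = U.card * C.card := by
    have := Finset.card_eq_sum_card_fiberwise
      (f := fun p : G × G => p.1 + p.2) (s := U ×ˢ C') (t := U + C')
      (by intro x hp; obtain ⟨a, b⟩ := x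
          simp only [mem_coe, mem_product] at hp
          exact add_mem_add hp.1 hp.2)
    rw [Finset.card_product] at this
    have hcc : C'.card = C.card := Finset.card_image_of_injective _ neg_injective
    rw [← hcc]
    rw [this]
    refine Finset.sum_congr rfl fun t _ => ?_
    exact (fiber_card_aux U C t).symm
  -- energy bound
  have henergy : E[U, C] ≤ f t₀ * (U.card * C.card) := by
    rw [← energy_neg_aux U C]
    rw [Finset.addEnergy_eq_sum_sq']
    have h1 : ∀ t ∈ U + C', ((U ×ˢ C').filter fun p : G × G => p.1 + p.2 = t).card ^ 2
        ≤ f t₀ * f t := by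
      intro t ht
      rw [show ((U ×ˢ C').filter fun p : G × G => p.1 + p.2 = t) =
          ((U ×ˢ C').filter fun p : G × G => p.1 + p.2 = t) from rfl, fiber_card_aux U C t]
      have : f t ≤ f t₀ := ht₀ t ht
      calc (f t) ^ 2 = f t * f t := sq (f t) ▸ pow_two (f t)
        _ ≤ f t₀ * f t := Nat.mul_le_mul_right _ this
    calc ∑ t ∈ U + C', ((U ×ˢ C').filter fun p : G × G => p.1 + p.2 = t).card ^ 2
        ≤ ∑ t ∈ U + C', f t₀ * f t := Finset.sum_le_sum h1
      _ = f t₀ * ∑ t ∈ U + C', f t := by rw [Finset.mul_sum]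
      _ = f t₀ * (U.card * C.card) := by rw [hsum]
  -- Cauchy–Schwarz lower bound for energy
  have hCS : U.card ^ 2 * C.card ^ 2 ≤ (U + C).card * E[U, C] :=
    Finset.le_card_add_mul_addEnergy U C
  have hpos : 0 < U.card * C.card := Nat.mul_pos hU.card_pos hC.card_pos
  have : (U.card * C.card) * (U.card * C.card) ≤ (f t₀ * (U + C).card) * (U.card * C.card) := by
    calc (U.card * C.card) * (U.card * C.card) = U.card ^ 2 * C.card ^ 2 := by ring
      _ ≤ (U + C).card * E[U, C] := hCS
      _ ≤ (U + C).card * (f t₀ * (U.card * C.card)) := Nat.mul_le_mul_left _ henergy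
      _ = (f t₀ * (U + C).card) * (U.card * C.card) := by ring
  exact Nat.le_of_mul_le_mul_right this hpos

/-- Greedy covering induction. -/
lemma greedy_aux (B C : Finset G) (hC : C.Nonempty) (ε : ℝ) (hε0 : 0 < ε)
    (U : Finset G) (hUB : U ⊆ B) :
    ∃ T : Finset G,
      ((U.filter fun u => ∀ t ∈ T, u - t ∉ C).card : ℝ) ≤ ε * B.card ∧
      (T.card : ℝ) * (ε * B.card * C.card) ≤ (U.card : ℝ) * ((B + C).card : ℝ) := by
  classical
  induction U using Finset.strongInduction with
  | _ U ih =>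
  by_cases hsmall : (U.card : ℝ) ≤ ε * B.card
  · refine ⟨∅, ?_, ?_⟩
    · calc ((U.filter fun u => ∀ t ∈ (∅ : Finset G), u - t ∉ C).card : ℝ)
          ≤ (U.card : ℝ) := by exact_mod_cast Finset.card_le_card (Finset.filter_subset _ _)
        _ ≤ ε * B.card := hsmall
    · simp
      positivity
  · push_neg at hsmall
    have hUpos : (0 : ℝ) < U.card := lt_of_le_of_lt (by positivity) hsmall
    have hUne : U.Nonempty := Finset.card_pos.mp (by exact_mod_cast hUpos)
    obtain ⟨t₀, ht₀⟩ := key_aux U C hUne hC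
    set V : Finset G := U.filter fun u => u - t₀ ∈ C with hV
    have hVBC : U.card * C.card ≤ V.card * (B + C).card := by
      refine le_trans ht₀ (Nat.mul_le_mul_left _ ?_)
      exact Finset.card_le_card (Finset.add_subset_add_right hUB)
    have hVpos : 0 < V.card := by
      have hlpos : 0 < U.card * C.card := Nat.mul_pos hUne.card_pos hC.card_pos
      have hx : 0 < V.card * (B + C).card := lt_of_lt_of_le hlpos hVBC
      exact Nat.pos_of_ne_zero (by rintro h; rw [h, Nat.zero_mul] at hx; exact lt_irrefl _ hx)
    set U' : Finset G := U.filter fun u => u - t₀ ∉ C with hU'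
    have hU'ss : U' ⊂ U := by
      refine Finset.ssubset_iff_of_subset (Finset.filter_subset _ _) |>.mpr ?_
      obtain ⟨v, hv⟩ := Finset.card_pos.mp hVpos
      simp only [hV, mem_filter] at hv
      exact ⟨v, hv.1, by simp [hU', hv.1, hv.2]⟩
    obtain ⟨T', hT'1, hT'2⟩ := ih U' hU'ss (le_trans (Finset.filter_subset _ _) hUB)
    refine ⟨insert t₀ T', ?_, ?_⟩
    · refine le_trans ?_ hT'1
      have hsub : (U.filter fun u => ∀ t ∈ insert t₀ T', u - t ∉ C)
          ⊆ (U'.filter fun u => ∀ t ∈ T', u - t ∉ C) := by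
        intro u hu
        simp only [mem_filter, mem_insert, hU'] at hu ⊢
        obtain ⟨hu1, hu2⟩ := hu
        exact ⟨⟨hu1, hu2 t₀ (Or.inl rfl)⟩, fun t ht => hu2 t (Or.inr ht)⟩
      exact_mod_cast Finset.card_le_card hsub
    · have hcard : ((insert t₀ T').card : ℝ) ≤ (T'.card : ℝ) + 1 := by
        exact_mod_cast Finset.card_insert_le t₀ T'
      have hsplit : (U'.card : ℝ) + (V.card : ℝ) = (U.card : ℝ) := by
        have := Finset.card_filter_add_card_filter_not
          (s := U) (p := fun u => u - t₀ ∈ C)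
        push_cast [← this]
        ring
      have hkey : ε * B.card * C.card ≤ (V.card : ℝ) * ((B + C).card : ℝ) := by
        have h1 : (U.card : ℝ) * C.card ≤ (V.card : ℝ) * ((B + C).card : ℝ) := by
          exact_mod_cast hVBC
        refine le_trans ?_ h1
        have : (0:ℝ) ≤ (C.card : ℝ) := by positivity
        nlinarith
      have hεpos : (0:ℝ) ≤ ε * B.card * C.card := by positivity
      calc ((insert t₀ T').card : ℝ) * (ε * B.card * C.card)
          ≤ ((T'.card : ℝ) + 1) * (ε * B.card * C.card) := by
            exact mul_le_mul_of_nonneg_right hcard hεpos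
        _ = (T'.card : ℝ) * (ε * B.card * C.card) + ε * B.card * C.card := by ring
        _ ≤ (U'.card : ℝ) * ((B + C).card : ℝ) + (V.card : ℝ) * ((B + C).card : ℝ) := by
            exact add_le_add hT'2 hkey
        _ = ((U'.card : ℝ) + (V.card : ℝ)) * ((B + C).card : ℝ) := by ring
        _ = (U.card : ℝ) * ((B + C).card : ℝ) := by rw [hsplit]

end Aux

theorem stmt_11 {G : Type*} [AddCommGroup G] [DecidableEq G]
    (B C : Finset G) (hB : B.Nonempty) (hC : C.Nonempty)
    (ε : ℝ) (hε0 : 0 < ε) (hε1 : ε < 1) :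
    ∃ T : Finset G,
      (T.card : ℝ) ≤ ((B + C).card : ℝ) / (ε * (C.card : ℝ)) ∧
      (1 - ε) * (B.card : ℝ) ≤
        ((B.filter (fun b => ∃ t ∈ T, ∃ c ∈ C, b = c + t)).card : ℝ) := by
  classical
  obtain ⟨T, hT1, hT2⟩ := greedy_aux B C hC ε hε0 B (Finset.Subset.refl B)
  refine ⟨T, ?_, ?_⟩
  · have hBpos : (0:ℝ) < B.card := by exact_mod_cast hB.card_pos
    have hCpos : (0:ℝ) < C.card := by exact_mod_cast hC.card_pos
    rw [le_div_iff₀ (by positivity)]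
    have := hT2
    have h2 : (T.card : ℝ) * (ε * C.card) * B.card ≤ ((B + C).card : ℝ) * B.card := by
      calc (T.card : ℝ) * (ε * C.card) * B.card
          = (T.card : ℝ) * (ε * B.card * C.card) := by ring
        _ ≤ (B.card : ℝ) * ((B + C).card : ℝ) := hT2
        _ = ((B + C).card : ℝ) * B.card := by ring
    exact le_of_mul_le_mul_right h2 hBpos
  · have hpred : ∀ b : G, (∃ t ∈ T, ∃ c ∈ C, b = c + t) ↔ ¬ (∀ t ∈ T, b - t ∉ C) := by
      intro b
      constructor
      · rintro ⟨t, ht, c, hc, rfl⟩ h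
        exact h t ht (by simpa using hc)
      · intro h
        push_neg at h
        obtain ⟨t, ht, hbc⟩ := h
        exact ⟨t, ht, b - t, hbc, by abel⟩
    have hfe : (B.filter (fun b => ∃ t ∈ T, ∃ c ∈ C, b = c + t))
        = (B.filter fun b => ¬ (∀ t ∈ T, b - t ∉ C)) := by
      apply Finset.filter_congr
      intro b _
      simp only [hpred]
    rw [hfe]
    have hsplit := Finset.card_filter_add_card_filter_not
      (s := B) (p := fun b => ∀ t ∈ T, b - t ∉ C)
    have : ((B.filter fun b => ¬ (∀ t ∈ T, b - t ∉ C)).card : ℝ)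
        = (B.card : ℝ) - ((B.filter fun b => ∀ t ∈ T, b - t ∉ C).card : ℝ) := by
      push_cast [← hsplit]
      ring
    rw [this]
    linarith
end

section
/- Let F be a field, Z ⊆ F finite, and suppose x₁, x₂, x₃, x₄, y₁, y₂, y₃, y₄ ∈ Z satisfy (x₁−x₂)/(x₃−x₄) + (y₁−y₂)/(y₃−y₄) ∉ R(Z) while R(Z) is closed under multiplication, where R(Z) = (Z−Z)/(Z−Z). Then there exist z₁, z₂, z₃, z₄ ∈ Z with z₃ ≠ z₄ such that (z₁−z₂)/(z₃−z₄) + 1 ∉ R(Z). -/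
theorem stmt_17 {F : Type*} [Field F] (Z : Finset F) (hZ : 2 ≤ Z.card)
    (x₁ x₂ x₃ x₄ y₁ y₂ y₃ y₄ : F)
    (hx₁ : x₁ ∈ Z) (hx₂ : x₂ ∈ Z) (hx₃ : x₃ ∈ Z) (hx₄ : x₄ ∈ Z)
    (hy₁ : y₁ ∈ Z) (hy₂ : y₂ ∈ Z) (hy₃ : y₃ ∈ Z) (hy₄ : y₄ ∈ Z)
    (hx34 : x₃ ≠ x₄) (hy34 : y₃ ≠ y₄) (hy12 : y₁ ≠ y₂)
    (hsum : (x₁ - x₂) / (x₃ - x₄) + (y₁ - y₂) / (y₃ - y₄) ∉ ratioSet Z)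
    (hmul : ∀ r ∈ ratioSet Z, ∀ s ∈ ratioSet Z, r * s ∈ ratioSet Z) :
    ∃ z₁ ∈ Z, ∃ z₂ ∈ Z, ∃ z₃ ∈ Z, ∃ z₄ ∈ Z, z₃ ≠ z₄ ∧
      (z₁ - z₂) / (z₃ - z₄) + 1 ∉ ratioSet Z := by
  set r := (x₁ - x₂) / (x₃ - x₄) with hr
  set s := (y₁ - y₂) / (y₃ - y₄) with hs
  have hsne : s ≠ 0 := div_ne_zero (sub_ne_zero.mpr hy12) (sub_ne_zero.mpr hy34)
  have hrR : r ∈ ratioSet Z := ⟨x₁, hx₁, x₂, hx₂, x₃, hx₃, x₄, hx₄, hx34, rfl⟩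
  have hsR : s ∈ ratioSet Z := ⟨y₁, hy₁, y₂, hy₂, y₃, hy₃, y₄, hy₄, hy34, rfl⟩
  have hinvR : s⁻¹ ∈ ratioSet Z := by
    refine ⟨y₃, hy₃, y₄, hy₄, y₁, hy₁, y₂, hy₂, hy12, ?_⟩
    rw [hs]
    field_simp
  have htR : r * s⁻¹ ∈ ratioSet Z := hmul r hrR s⁻¹ hinvR
  obtain ⟨z₁, hz₁, z₂, hz₂, z₃, hz₃, z₄, hz₄, hz34, hzeq⟩ := htR
  refine ⟨z₁, hz₁, z₂, hz₂, z₃, hz₃, z₄, hz₄, hz34, ?_⟩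
  intro hcon
  apply hsum
  have : ((z₁ - z₂) / (z₃ - z₄) + 1) * s = r + s := by
    rw [← hzeq]
    field_simp
  rw [← this]
  exact hmul _ hcon s hsR
end
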